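/- Let T > 0 and let q, Y : ℝ → ℍ be differentiable with ‖q(t)‖ = ‖Y(t)‖ = 1 on [0,T]. Suppose q satisfies q'(t) = (u1(t) e1 + u2(t) e2) · q(t) on [0,T] for real-valued functions u1, u2, and suppose there is a differentiable function φ : ℝ → ℝ with q(t) = exp(φ(t) e1) · Y(t) on [0,T]. Let ω1, ω2, ω3 : ℝ → ℝ satisfy Y'(t)·Y(t)* = ω1(t) e1 + ω2(t) e2 + ω3(t) e3 and ω2(t)² + ω3(t)² > 0 on [0,T]. Then for all t ∈ [0,T], as an identity of complex numbers, exp(4 i φ(t)) · (ω2(t)² + ω3(t)²) = (ω2(t) − i ω3(t))². -/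

import Mathlib

open Quaternion Set

/-- The imaginary quaternion unit `i`. -/
noncomputable def e1 : ℍ[ℝ] := ⟨0, 1, 0, 0⟩
/-- The imaginary quaternion unit `j`. -/
noncomputable def e2 : ℍ[ℝ] := ⟨0, 0, 1, 0⟩
/-- The imaginary quaternion unit `k`. -/
noncomputable def e3 : ℍ[ℝ] := ⟨0, 0, 0, 1⟩

/-- `qexp φ = exp (φ e1) = cos φ + (sin φ) e1`. -/
noncomputable def qexp (φ : ℝ) : ℍ[ℝ] :=
  (Real.cos φ : ℍ[ℝ]) + (Real.sin φ : ℍ[ℝ]) * e1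

lemma qexp_eq (x : ℝ) : qexp x = Real.cos x • (1 : ℍ[ℝ]) + Real.sin x • e1 := by
  simp [qexp, Algebra.smul_def, mul_one]

@[simp] lemma e1_re : e1.re = 0 := rfl
@[simp] lemma e1_imI : e1.imI = 1 := rfl
@[simp] lemma e1_imJ : e1.imJ = 0 := rfl
@[simp] lemma e1_imK : e1.imK = 0 := rfl
@[simp] lemma e2_re : e2.re = 0 := rfl
@[simp] lemma e2_imI : e2.imI = 0 := rfl
@[simp] lemma e2_imJ : e2.imJ = 1 := rfl
@[simp] lemma e2_imK : e2.imK = 0 := rfl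
@[simp] lemma e3_re : e3.re = 0 := rfl
@[simp] lemma e3_imI : e3.imI = 0 := rfl
@[simp] lemma e3_imJ : e3.imJ = 0 := rfl
@[simp] lemma e3_imK : e3.imK = 1 := rfl

theorem stmt_1
    (T : ℝ) (hT : 0 < T)
    (q Y : ℝ → ℍ[ℝ]) (q' Y' : ℝ → ℍ[ℝ])
    (hq : ∀ t ∈ Icc (0:ℝ) T, HasDerivAt q (q' t) t)
    (hY : ∀ t ∈ Icc (0:ℝ) T, HasDerivAt Y (Y' t) t)
    (hqnorm : ∀ t ∈ Icc (0:ℝ) T, ‖q t‖ = 1)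
    (hYnorm : ∀ t ∈ Icc (0:ℝ) T, ‖Y t‖ = 1)
    (u1 u2 : ℝ → ℝ)
    (hode : ∀ t ∈ Icc (0:ℝ) T,
      q' t = (((u1 t : ℝ) : ℍ[ℝ]) * e1 + ((u2 t : ℝ) : ℍ[ℝ]) * e2) * q t)
    (φ φ' : ℝ → ℝ)
    (hφ : ∀ t ∈ Icc (0:ℝ) T, HasDerivAt φ (φ' t) t)
    (hqY : ∀ t ∈ Icc (0:ℝ) T, q t = qexp (φ t) * Y t)
    (ω1 ω2 ω3 : ℝ → ℝ)
    (hYY : ∀ t ∈ Icc (0:ℝ) T,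
      Y' t * star (Y t) =
        ((ω1 t : ℝ) : ℍ[ℝ]) * e1 + ((ω2 t : ℝ) : ℍ[ℝ]) * e2 + ((ω3 t : ℝ) : ℍ[ℝ]) * e3)
    (hpos : ∀ t ∈ Icc (0:ℝ) T, 0 < ω2 t ^ 2 + ω3 t ^ 2) :
    ∀ t ∈ Icc (0:ℝ) T,
      Complex.exp (4 * Complex.I * (φ t : ℂ)) * ((ω2 t ^ 2 + ω3 t ^ 2 : ℝ) : ℂ) =
        ((ω2 t : ℂ) - Complex.I * (ω3 t : ℂ)) ^ 2 := by
  intro t ht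
  set c1 := Real.cos (φ t) with hc1
  set s1 := Real.sin (φ t) with hs1
  -- derivative of the cos/sin components
  have hcos : HasDerivAt (fun x => Real.cos (φ x)) (-s1 * φ' t) t :=
    (Real.hasDerivAt_cos (φ t)).comp t (hφ t ht)
  have hsin : HasDerivAt (fun x => Real.sin (φ x)) (c1 * φ' t) t :=
    (Real.hasDerivAt_sin (φ t)).comp t (hφ t ht)
  have hF : HasDerivAt (fun x => qexp (φ x))
      ((-s1 * φ' t) • (1 : ℍ[ℝ]) + (c1 * φ' t) • e1) t := by
    simp only [qexp_eq]
    exact (hcos.smul_const (1 : ℍ[ℝ])).add (hsin.smul_const e1)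
  have hG : HasDerivAt (fun x => qexp (φ x) * Y x)
      (((-s1 * φ' t) • (1 : ℍ[ℝ]) + (c1 * φ' t) • e1) * Y t + qexp (φ t) * Y' t) t :=
    hF.mul (hY t ht)
  -- the two derivatives agree
  have hUD : UniqueDiffWithinAt ℝ (Icc (0:ℝ) T) t := (uniqueDiffOn_Icc hT) t ht
  have h1 : HasDerivWithinAt (fun x => qexp (φ x) * Y x) (q' t) (Icc (0:ℝ) T) t :=
    ((hq t ht).hasDerivWithinAt).congr (fun x hx => (hqY x hx).symm) (hqY t ht).symm
  have hder : q' t = ((-s1 * φ' t) • (1 : ℍ[ℝ]) + (c1 * φ' t) • e1) * Y t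
      + qexp (φ t) * Y' t := by
    rw [← h1.derivWithin hUD, (hG.hasDerivWithinAt).derivWithin hUD]
  -- main quaternion equation
  have hYs : Y t * star (Y t) = 1 := by
    have := Quaternion.self_mul_star (Y t)
    rw [this, Quaternion.normSq_eq_norm_mul_self, hYnorm t ht]
    norm_num
  have key : (((u1 t : ℝ) : ℍ[ℝ]) * e1 + ((u2 t : ℝ) : ℍ[ℝ]) * e2) * qexp (φ t)
      = ((-s1 * φ' t) • (1 : ℍ[ℝ]) + (c1 * φ' t) • e1)
        + qexp (φ t) * (((ω1 t : ℝ) : ℍ[ℝ]) * e1 + ((ω2 t : ℝ) : ℍ[ℝ]) * e2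
          + ((ω3 t : ℝ) : ℍ[ℝ]) * e3) := by
    have h2 := (hode t ht).symm.trans hder
    rw [hqY t ht] at h2
    have h3 := congrArg (· * star (Y t)) h2
    simp only [mul_assoc, hYs, mul_one] at h3
    rw [← hYY t ht]
    simp only [add_mul, mul_assoc, hYs, mul_one] at h3 ⊢
    exact h3
  have e2c := congrArg QuaternionAlgebra.imJ key
  have e3c := congrArg QuaternionAlgebra.imK key
  simp [qexp, Quaternion.ext_iff, Quaternion.re_mul, Quaternion.imI_mul, Quaternion.imJ_mul, Quaternion.imK_mul] at e2c e3c
  have hang : 2*s1*c1*ω2 t + (c1^2 - s1^2)*ω3 t = 0 := by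
    linear_combination (-s1) * e2c - c1 * e3c
  -- pass to double angles
  set s2 := Real.sin (2 * φ t) with hs2
  set c2 := Real.cos (2 * φ t) with hc2
  have hsd : s2 = 2 * s1 * c1 := by
    rw [hs2, Real.sin_two_mul]
  have hcd : c2 = c1 ^ 2 - s1 ^ 2 := by
    rw [hc2, Real.cos_two_mul, ← hc1]
    have := Real.sin_sq_add_cos_sq (φ t)
    rw [← hs1, ← hc1] at this
    nlinarith [this]
  have hang2 : ω2 t * s2 + ω3 t * c2 = 0 := by
    rw [hsd, hcd]; linarith [hang]
  have hpyth : s2 ^ 2 + c2 ^ 2 = 1 := by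
    rw [hs2, hc2]; exact Real.sin_sq_add_cos_sq _
  -- rewrite the complex exponential
  have hexp : Complex.exp (4 * Complex.I * (φ t : ℂ))
      = ((c2 ^ 2 - s2 ^ 2 : ℝ) : ℂ) + Complex.I * ((2 * s2 * c2 : ℝ) : ℂ) := by
    have h4 : (4 : ℂ) * Complex.I * (φ t : ℂ) = ((2 * (2 * φ t) : ℝ) : ℂ) * Complex.I := by
      push_cast; ring
    have hc4 : Real.cos (2 * (2 * φ t)) = c2 ^ 2 - s2 ^ 2 := by
      rw [Real.cos_two_mul, ← hc2]; linarith [hpyth]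
    have hs4 : Real.sin (2 * (2 * φ t)) = 2 * s2 * c2 := by
      rw [Real.sin_two_mul, ← hs2, ← hc2]
    rw [h4, Complex.exp_mul_I, ← Complex.ofReal_cos, ← Complex.ofReal_sin, hc4, hs4]
    push_cast
    ring
  rw [hexp]
  have hangC : (ω2 t : ℂ) * (s2 : ℂ) + (ω3 t : ℂ) * (c2 : ℂ) = 0 := by
    exact_mod_cast congrArg (fun x : ℝ => (x : ℂ)) hang2
  have hpythC : (s2 : ℂ) ^ 2 + (c2 : ℂ) ^ 2 = 1 := by
    exact_mod_cast congrArg (fun x : ℝ => (x : ℂ)) hpyth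
  push_cast
  linear_combination (2*((c2:ℂ)*(ω3 t) - (s2:ℂ)*(ω2 t)) + 2*Complex.I*((c2:ℂ)*(ω2 t) + (s2:ℂ)*(ω3 t))) * hangC + ((2:ℂ)*(ω3 t)^2 + 2*Complex.I*(ω2 t)*(ω3 t)) * (hpythC) + (-4*Complex.I*(ω2 t:ℂ)*(ω3 t:ℂ) + (ω2 t:ℂ)^2 - 3*(ω3 t:ℂ)^2) * hpythC + (-((ω3 t:ℂ)^2)) * Complex.I_sq
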